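/- (Straightening consequence) Let u, v be words on an alphabet L, 1 ≤ i ≠ j ≤ m, and p, q nonnegative integers. In Skew[L|m]: Σ_{(v)} (u v₍₁₎|i^{(p)})(v₍₂₎|j^{(q)}) = (-1)^{|u||v|} Σ_{(u), r} (-1)^{|u₍₂₎|} (v u₍₁₎|i^{(p)} j^{(r)})(u₍₂₎|j^{(q-r)}), where r ranges over 0 ≤ r ≤ q and the slices range over all coproduct slices of v (resp. u) of the appropriate lengths. -/

import Mathlib

/-- The letterplace algebra `Skew[L|m]`. -/
abbrev LetterplaceAlgebra (L : Type*) (m : ℕ) : Type _ :=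
  ExteriorAlgebra ℤ ((L × Fin m) →₀ ℤ)

/-- The letterplace variable `(x|i)`. -/
noncomputable def lpVar {L : Type*} {m : ℕ} (x : L) (i : Fin m) : LetterplaceAlgebra L m :=
  ExteriorAlgebra.ι ℤ (Finsupp.single (x, i) 1)

/-- The shuffle sign of the coproduct slice `(Sᶜ, S)` of a word of length `a`. -/
def shuffleSign {a : ℕ} (S : Finset (Fin a)) : ℤ :=
  (-1) ^ (∑ i ∈ S, (Sᶜ.filter fun j => i < j).card)

/-- The biproduct `(w | 1^{(q 1)} ⋯ m^{(q m)})` (Laplace expansion); zero if the length of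
`w` differs from `q 1 + ⋯ + q m`. -/
noncomputable def biproduct {L : Type*} {m : ℕ} [DecidableEq L] {ℓ : ℕ}
    (w : Fin ℓ → L) (q : Fin m → ℕ) : LetterplaceAlgebra L m :=
  ∑ f ∈ Finset.univ.filter
      (fun f : Fin ℓ → Fin m => ∀ p, (Finset.univ.filter fun t => f t = p).card = q p),
    (List.ofFn fun t => lpVar (w t) (f t)).prod

/-- The subword of `w` on the positions in `S`, in increasing order. -/
def subword {L : Type*} {c : ℕ} (w : Fin c → L) (S : Finset (Fin c)) : Fin S.card → L :=
  fun t => w (S.orderIsoOfFin rfl t)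

namespace Stmt16Aux
open ExteriorAlgebra Finset
variable {R : Type*} [CommRing R] {M : Type*} [AddCommGroup M] [Module R M]

lemma iota_anticomm (a b : M) : ι R a * ι R b = - (ι R b * ι R a) :=
  eq_neg_of_add_eq_zero_left (ι_add_mul_swap a b)

lemma iota_mul_list (a : M) (l : List M) :
    ι R a * (l.map (ι R)).prod = ((-1 : ℤ) ^ l.length) • ((l.map (ι R)).prod * ι R a) := by
  induction l with
  | nil => simp
  | cons b l ih =>
    simp only [List.map_cons, List.prod_cons, List.length_cons]
    rw [← mul_assoc, iota_anticomm, neg_mul, mul_assoc, ih]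
    rw [mul_smul_comm, ← mul_assoc]
    rw [pow_succ]
    module

/-- ordered product of `ι (y t)` over `t ∈ S`. -/
noncomputable def sprod {k : ℕ} (y : Fin k → M) (S : Finset (Fin k)) : ExteriorAlgebra R M :=
  ((S.sort (· ≤ ·)).map fun t => ι R (y t)).prod

/-- number of inverted pairs `(a, b) ∈ A × B` with `b < a`. -/
def inv2 {k : ℕ} (A B : Finset (Fin k)) : ℕ := ∑ b ∈ B, (A.filter fun a => b < a).card

instance {k : ℕ} : IsAntisymm (Fin k) (· < ·) :=
  ⟨fun a b h h' => absurd (h.trans h') (lt_irrefl a)⟩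

lemma sort_insert_of_lt {k : ℕ} {A : Finset (Fin k)} {b : Fin k} (hb : ∀ a ∈ A, b < a) :
    (insert b A).sort (· ≤ ·) = b :: A.sort (· ≤ ·) := by
  have hbA : b ∉ A := fun h => lt_irrefl b (hb b h)
  refine (fun hp h1 h2 => List.Perm.eq_of_pairwise' (r := (· < ·)) h1 h2 hp) ?_ ?_ ?_
  · exact ((Finset.sort_perm_toList _ _).trans (Finset.toList_insert hbA)).trans
      ((Finset.sort_perm_toList A _).symm.cons b)
  · exact (Finset.sortedLT_sort _).pairwise
  · exact List.pairwise_cons.2 ⟨fun x hx => hb x (by rwa [Finset.mem_sort] at hx),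
      (Finset.sortedLT_sort _).pairwise⟩

@[simp] lemma sprod_empty {k : ℕ} (y : Fin k → M) : sprod (R := R) y ∅ = 1 := by
  simp [sprod]

lemma sprod_insert_of_lt {k : ℕ} (y : Fin k → M) {A : Finset (Fin k)} {b : Fin k}
    (hb : ∀ a ∈ A, b < a) : sprod (R := R) y (insert b A) = ι R (y b) * sprod y A := by
  rw [sprod, sort_insert_of_lt hb]
  simp [sprod]

lemma iota_mul_sprod {k : ℕ} (y : Fin k → M) {A : Finset (Fin k)} {b : Fin k} (hb : b ∉ A) :
    ι R (y b) * sprod y A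
      = ((-1 : ℤ) ^ (A.filter fun a => a < b).card) • sprod y (insert b A) := by
  classical
  induction A using Finset.induction_on_min with
  | empty =>
    rw [show ((∅ : Finset (Fin k)) : Finset (Fin k)).filter (fun a => a < b) = ∅ by simp]
    rw [sprod_insert_of_lt y (A := ∅) (by simp)]
    simp
  | insert c s hcs ih =>
    have hbc : b ≠ c := fun h => hb (h ▸ Finset.mem_insert_self c s)
    have hbs : b ∉ s := fun h => hb (Finset.mem_insert_of_mem h)
    rcases lt_or_gt_of_ne hbc with hlt | hgt
    · have hball : ∀ a ∈ insert c s, b < a := by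
        intro a ha
        rcases Finset.mem_insert.1 ha with rfl | ha
        · exact hlt
        · exact hlt.trans (hcs a ha)
      rw [sprod_insert_of_lt y hball]
      have : (Finset.filter (fun a => a < b) (insert c s)).card = 0 := by
        rw [Finset.card_eq_zero, Finset.filter_eq_empty_iff]
        exact fun a ha => not_lt.2 (hball a ha).le
      rw [this]; simp
    · -- c < b
      rw [sprod_insert_of_lt y hcs, ← mul_assoc, iota_anticomm, neg_mul, mul_assoc, ih hbs]
      have hcb : ∀ a ∈ insert b s, c < a := by
        intro a ha
        rcases Finset.mem_insert.1 ha with rfl | ha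
        · exact hgt
        · exact hcs a ha
      rw [mul_smul_comm, ← sprod_insert_of_lt y hcb, Finset.insert_comm]
      have hcnt : (Finset.filter (fun a => a < b) (insert c s)).card
          = (Finset.filter (fun a => a < b) s).card + 1 := by
        rw [Finset.filter_insert, if_pos hgt, Finset.card_insert_of_notMem]
        intro hmem
        exact (fun h => absurd h (by simpa using fun hc => hcs c hc) : c ∉ s)
          (Finset.mem_of_mem_filter c hmem)
      rw [hcnt, pow_succ]
      module


lemma sprod_mul_iota {k : ℕ} (y : Fin k → M) (A : Finset (Fin k)) (b : Fin k) :
    sprod (R := R) y A * ι R (y b)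
      = ((-1 : ℤ) ^ A.card) • (ι R (y b) * sprod y A) := by
  have h := iota_mul_list (R := R) (y b) ((A.sort (· ≤ ·)).map y)
  rw [List.map_map] at h
  have hl : (((A.sort (· ≤ ·)).map y).length) = A.card := by simp
  rw [hl] at h
  have : sprod (R := R) y A = ((A.sort (· ≤ ·)).map (ι R ∘ y)).prod := by
    rw [sprod]; congr 1
  have hone : ((-1 : ℤ) ^ A.card) * ((-1 : ℤ) ^ A.card) = 1 := by
    rw [← pow_add]
    exact Even.neg_one_pow ⟨A.card, rfl⟩
  rw [this, h, smul_smul, hone, one_smul]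

@[simp] lemma inv2_empty_right {k : ℕ} (A : Finset (Fin k)) : inv2 A ∅ = 0 := by simp [inv2]
@[simp] lemma inv2_empty_left {k : ℕ} (B : Finset (Fin k)) : inv2 ∅ B = 0 := by simp [inv2]

lemma filter_card_lt_add_gt {k : ℕ} {A : Finset (Fin k)} {b : Fin k} (hb : b ∉ A) :
    (A.filter fun a => a < b).card + (A.filter fun a => b < a).card = A.card := by
  classical
  rw [← Finset.card_union_of_disjoint]
  · congr 1
    ext a
    simp only [Finset.mem_union, Finset.mem_filter]
    constructor
    · rintro (⟨h, _⟩ | ⟨h, _⟩) <;> exact h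
    · intro ha
      rcases lt_or_gt_of_ne (fun h : a = b => hb (h ▸ ha)) with h | h
      · exact Or.inl ⟨ha, h⟩
      · exact Or.inr ⟨ha, h⟩
  · rw [Finset.disjoint_filter]
    intro a _ h1
    exact not_lt.2 h1.le

lemma sprod_mul_sprod {k : ℕ} (y : Fin k → M) {B A : Finset (Fin k)} (hAB : Disjoint A B) :
    sprod (R := R) y A * sprod y B = ((-1 : ℤ) ^ inv2 A B) • sprod y (A ∪ B) := by
  classical
  induction B using Finset.induction_on_min generalizing A with
  | empty => simp
  | insert b s hbs ih =>
    have hbA : b ∉ A := fun h =>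
      (Finset.disjoint_left.1 hAB) h (Finset.mem_insert_self b s)
    have hAs : Disjoint A s := hAB.mono_right (by intro x hx; exact Finset.mem_insert_of_mem hx)
    have hbs' : b ∉ s := fun h => lt_irrefl b (hbs b h)
    rw [sprod_insert_of_lt y hbs, ← mul_assoc, sprod_mul_iota, smul_mul_assoc, mul_assoc,
      ih hAs, mul_smul_comm, iota_mul_sprod y (by
        intro h
        rcases Finset.mem_union.1 h with h | h
        · exact hbA h
        · exact hbs' h)]
    rw [smul_smul, smul_smul]
    have hset : insert b (A ∪ s) = A ∪ insert b s := by
      ext x; simp [Finset.mem_insert, Finset.mem_union, or_left_comm, or_comm]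
    rw [hset]
    congr 1
    -- sign bookkeeping
    have e1 : ((A ∪ s).filter fun a => a < b).card = (A.filter fun a => a < b).card := by
      congr 1
      ext a
      simp only [Finset.mem_filter, Finset.mem_union]
      constructor
      · rintro ⟨h | h, hlt⟩
        · exact ⟨h, hlt⟩
        · exact absurd hlt (not_lt.2 (hbs a h).le)
      · rintro ⟨h, hlt⟩; exact ⟨Or.inl h, hlt⟩
    have e2 : inv2 A (insert b s) = (A.filter fun a => b < a).card + inv2 A s := by
      rw [inv2, Finset.sum_insert hbs', inv2]
    have e3 : (A.filter fun a => a < b).card + (A.filter fun a => b < a).card = A.card :=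
      filter_card_lt_add_gt hbA
    rw [← pow_add, ← pow_add, e1, e2]
    have : A.card + inv2 A s + (A.filter fun a => a < b).card
        = 2 * (A.filter fun a => a < b).card + ((A.filter fun a => b < a).card + inv2 A s) := by
      omega
    rw [this, pow_add, pow_mul, neg_one_sq, one_pow, one_mul]

lemma inv2_union_left {k : ℕ} {A B C : Finset (Fin k)} (h : Disjoint A B) :
    inv2 (A ∪ B) C = inv2 A C + inv2 B C := by
  classical
  rw [inv2, inv2, inv2, ← Finset.sum_add_distrib]
  refine Finset.sum_congr rfl fun c _ => ?_
  rw [Finset.filter_union, Finset.card_union_of_disjoint]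
  exact Finset.disjoint_filter_filter h

lemma sort_image {a k : ℕ} {f : Fin a → Fin k} (hf : StrictMono f) (S : Finset (Fin a)) :
    (S.image f).sort (· ≤ ·) = (S.sort (· ≤ ·)).map f := by
  classical
  refine (fun hp h1 h2 => List.Perm.eq_of_pairwise' (r := (· < ·)) h1 h2 hp) ?_ ?_ ?_
  · rw [List.perm_ext_iff_of_nodup (Finset.sort_nodup _ _)
      ((Finset.sort_nodup _ _).map hf.injective)]
    intro x
    simp [Finset.mem_sort, List.mem_map, Finset.mem_image]
  · exact (Finset.sortedLT_sort _).pairwise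
  · exact List.Pairwise.map f (fun a b h => hf h) (Finset.sortedLT_sort S).pairwise

lemma map_sort_eq_sprod {a k : ℕ} (y : Fin k → M) {f : Fin a → Fin k} (hf : StrictMono f)
    (z : Fin a → M) (A : Finset (Fin a)) (hz : ∀ t ∈ A, y (f t) = z t) :
    ((A.sort (· ≤ ·)).map fun t => ι R (z t)).prod = sprod y (A.image f) := by
  rw [sprod, sort_image hf, List.map_map]
  congr 1
  refine List.map_congr_left fun t ht => ?_
  rw [Function.comp_apply, hz t (by rwa [Finset.mem_sort] at ht)]

lemma ofFn_eq_sprod {a k : ℕ} (y : Fin k → M) {f : Fin a → Fin k} (hf : StrictMono f)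
    (z : Fin a → M) (hz : ∀ t, y (f t) = z t) :
    (List.ofFn fun t => ι R (z t)).prod = sprod y (Finset.univ.image f) := by
  rw [← map_sort_eq_sprod y hf z Finset.univ (fun t _ => hz t)]
  congr 1
  rw [Fin.sort_univ]
  apply List.ext_getElem
  · simp
  · intro n h1 h2
    simp

lemma inv2_image {a k : ℕ} {f : Fin a → Fin k} (hf : StrictMono f) (A B : Finset (Fin a)) :
    inv2 (A.image f) (B.image f) = inv2 A B := by
  classical
  rw [inv2, Finset.sum_image (fun x _ y _ h => hf.injective h), inv2]
  refine Finset.sum_congr rfl fun b _ => ?_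
  rw [Finset.filter_image]
  rw [Finset.card_image_of_injective _ hf.injective]
  congr 1
  exact Finset.filter_congr fun a _ => by simp [hf.lt_iff_lt]

lemma castAdd_lt_natAdd {a b : ℕ} (s : Fin a) (t : Fin b) :
    Fin.castAdd b s < Fin.natAdd a t := by
  rw [Fin.lt_def]
  simp only [Fin.coe_castAdd, Fin.coe_natAdd]
  omega

lemma castAdd_ne_natAdd {a b : ℕ} (s : Fin a) (t : Fin b) :
    Fin.castAdd b s ≠ Fin.natAdd a t := (castAdd_lt_natAdd s t).ne

lemma disjoint_image_castAdd_natAdd {a b : ℕ} (A : Finset (Fin a)) (B : Finset (Fin b)) :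
    Disjoint (A.image (Fin.castAdd b)) (B.image (Fin.natAdd a)) := by
  rw [Finset.disjoint_left]
  rintro x hx hy
  obtain ⟨s, _, rfl⟩ := Finset.mem_image.1 hx
  obtain ⟨t, _, h⟩ := Finset.mem_image.1 hy
  exact castAdd_ne_natAdd s t h.symm

lemma union_image_castAdd_natAdd {a b : ℕ} :
    (Finset.univ.image (Fin.castAdd b) : Finset (Fin (a + b)))
      ∪ Finset.univ.image (Fin.natAdd a) = Finset.univ := by
  ext x
  simp only [Finset.mem_union, Finset.mem_image, Finset.mem_univ, true_and, iff_true]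
  rcases lt_or_ge (x : ℕ) a with h | h
  · exact Or.inl ⟨⟨x, h⟩, Fin.ext rfl⟩
  · refine Or.inr ⟨⟨x - a, by omega⟩, Fin.ext ?_⟩
    simp only [Fin.coe_natAdd]
    omega

lemma mem_image_castAdd_iff {a b : ℕ} {A : Finset (Fin a)} {t : Fin a} :
    Fin.castAdd b t ∈ A.image (Fin.castAdd b) ↔ t ∈ A := by
  constructor
  · intro h
    obtain ⟨s, hs, he⟩ := Finset.mem_image.1 h
    rwa [← (Fin.strictMono_castAdd b).injective he]
  · exact fun h => Finset.mem_image_of_mem _ h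

lemma mem_image_natAdd_iff {a b : ℕ} {A : Finset (Fin b)} {t : Fin b} :
    Fin.natAdd a t ∈ A.image (Fin.natAdd a) ↔ t ∈ A := by
  constructor
  · intro h
    obtain ⟨s, hs, he⟩ := Finset.mem_image.1 h
    rwa [← (Fin.strictMono_natAdd a).injective he]
  · exact fun h => Finset.mem_image_of_mem _ h

lemma inv2_natAdd_castAdd {a b : ℕ} (A : Finset (Fin b)) (B : Finset (Fin a)) :
    inv2 (A.image (Fin.natAdd a)) (B.image (Fin.castAdd b)) = A.card * B.card := by
  classical
  rw [inv2, Finset.sum_image (fun x _ y _ h => (Fin.strictMono_castAdd b).injective h)]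
  rw [Finset.sum_congr rfl (fun s _ => ?_), Finset.sum_const, smul_eq_mul, mul_comm]
  rw [Finset.filter_true_of_mem, Finset.card_image_of_injective _
    (Fin.strictMono_natAdd a).injective]
  intro x hx
  obtain ⟨t, _, rfl⟩ := Finset.mem_image.1 hx
  exact castAdd_lt_natAdd s t

lemma inv2_castAdd_natAdd {a b : ℕ} (A : Finset (Fin a)) (B : Finset (Fin b)) :
    inv2 (A.image (Fin.castAdd b)) (B.image (Fin.natAdd a)) = 0 := by
  classical
  rw [inv2]
  refine Finset.sum_eq_zero fun x hx => ?_
  obtain ⟨t, _, rfl⟩ := Finset.mem_image.1 hx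
  rw [Finset.card_eq_zero, Finset.filter_eq_empty_iff]
  intro y hy
  obtain ⟨s, _, rfl⟩ := Finset.mem_image.1 hy
  exact fun h => absurd (h.trans (castAdd_lt_natAdd s t)) (lt_irrefl _)

lemma image_orderEmb_univ {k n : ℕ} (S : Finset (Fin k)) (h : S.card = n) :
    Finset.univ.image (fun t : Fin n => ((S.orderIsoOfFin h t : S) : Fin k)) = S := by
  apply Finset.coe_injective
  rw [Finset.coe_image, Finset.coe_univ, Set.image_univ]
  have : (fun t : Fin n => ((S.orderIsoOfFin h t : S) : Fin k)) = S.orderEmbOfFin h := rfl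
  rw [this, Finset.range_orderEmbOfFin]

lemma ofFn_subword_aux {α : Type*} {k : ℕ} (g : Fin k → α) (S : Finset (Fin k)) :
    (List.ofFn fun t : Fin S.card => g (S.orderIsoOfFin rfl t)) = (S.sort (· ≤ ·)).map g := by
  apply List.ext_getElem
  · simp
  · intro n h1 h2
    simp only [List.getElem_ofFn, List.getElem_map]
    congr 1

lemma powerset_split {a b : ℕ} {β : Type*} [AddCommMonoid β] (g : Finset (Fin (a + b)) → β) :
    ∑ B ∈ (Finset.univ : Finset (Fin (a + b))).powerset, g B
      = ∑ S ∈ (Finset.univ : Finset (Fin a)).powerset,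
          ∑ W ∈ (Finset.univ : Finset (Fin b)).powerset,
            g (S.image (Fin.castAdd b) ∪ W.image (Fin.natAdd a)) := by
  classical
  rw [← Finset.sum_product']
  refine (Finset.sum_nbij'
    (i := fun P : Finset (Fin a) × Finset (Fin b) =>
      P.1.image (Fin.castAdd b) ∪ P.2.image (Fin.natAdd a))
    (j := fun B => (B.preimage (Fin.castAdd b)
        ((Fin.strictMono_castAdd b).injective.injOn),
      B.preimage (Fin.natAdd a) ((Fin.strictMono_natAdd a).injective.injOn)))
    ?_ ?_ ?_ ?_ ?_).symm
  · intro P _; simp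
  · intro B _; simp [Finset.mem_product]
  · rintro ⟨S, W⟩ _
    simp only [Prod.mk.injEq]
    constructor
    · ext s
      simp only [Finset.mem_preimage, Finset.mem_union, Finset.mem_image]
      constructor
      · rintro (⟨s', hs', he⟩ | ⟨t, ht, he⟩)
        · rwa [← (Fin.strictMono_castAdd b).injective he]
        · exact absurd he.symm (castAdd_ne_natAdd s t)
      · intro hs; exact Or.inl ⟨s, hs, rfl⟩
    · ext t
      simp only [Finset.mem_preimage, Finset.mem_union, Finset.mem_image]
      constructor
      · rintro (⟨s, hs, he⟩ | ⟨t', ht', he⟩)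
        · exact absurd he (castAdd_ne_natAdd s t)
        · rwa [← (Fin.strictMono_natAdd a).injective he]
      · intro ht; exact Or.inr ⟨t, ht, rfl⟩
  · intro B _
    ext x
    simp only [Finset.mem_union, Finset.mem_image, Finset.mem_preimage]
    constructor
    · rintro (⟨s, hs, rfl⟩ | ⟨t, ht, rfl⟩) <;> assumption
    · intro hx
      rcases lt_or_ge (x : ℕ) a with h | h
      · exact Or.inl ⟨⟨x, h⟩, by rwa [show Fin.castAdd b ⟨x, h⟩ = x from Fin.ext rfl],
          Fin.ext rfl⟩
      · refine Or.inr ⟨⟨(x : ℕ) - a, by omega⟩, ?_, ?_⟩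
        · rwa [show Fin.natAdd a ⟨(x : ℕ) - a, by omega⟩ = x from Fin.ext (by
            simp only [Fin.coe_natAdd]; omega)]
        · exact Fin.ext (by simp only [Fin.coe_natAdd]; omega)
  · intro P _; rfl

lemma powerset_transport {k n : ℕ} (S : Finset (Fin k)) (h : S.card = n) {β : Type*}
    [AddCommMonoid β] (g : Finset (Fin k) → β) :
    ∑ W ∈ (Finset.univ : Finset (Fin n)).powerset,
        g (W.image fun t : Fin n => ((S.orderIsoOfFin h t : S) : Fin k))
      = ∑ Wh ∈ S.powerset, g Wh := by
  classical
  set e : Fin n → Fin k := fun t => ((S.orderIsoOfFin h t : S) : Fin k) with he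
  have hmono : StrictMono e := fun s t hst => by
    have := (S.orderIsoOfFin h).strictMono hst
    exact this
  refine Finset.sum_nbij' (i := fun W => W.image e)
    (j := fun Wh => Wh.preimage e hmono.injective.injOn) ?_ ?_ ?_ ?_ ?_
  · intro W _
    rw [Finset.mem_powerset]
    intro x hx
    obtain ⟨t, _, rfl⟩ := Finset.mem_image.1 hx
    exact (S.orderIsoOfFin h t).2
  · intro Wh _; simp
  · intro W _
    ext t
    simp only [Finset.mem_preimage, Finset.mem_image]
    exact ⟨fun ⟨s, hs, hes⟩ => by rwa [← hmono.injective hes], fun h' => ⟨t, h', rfl⟩⟩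
  · intro Wh hWh
    rw [Finset.mem_powerset] at hWh
    ext x
    simp only [Finset.mem_image, Finset.mem_preimage]
    constructor
    · rintro ⟨t, ht, rfl⟩; exact ht
    · intro hx
      have hxS : x ∈ S := hWh hx
      have : x ∈ Finset.univ.image e := by
        rw [he, image_orderEmb_univ S h]; exact hxS
      obtain ⟨t, _, rfl⟩ := Finset.mem_image.1 this
      exact ⟨t, hx, rfl⟩
  · intro W _; rfl

lemma pair_reindex {k : ℕ} {β : Type*} [AddCommMonoid β]
    (f : Finset (Fin k) → Finset (Fin k) → β) :
    ∑ T ∈ (Finset.univ : Finset (Fin k)).powerset, ∑ W ∈ Tᶜ.powerset, f T W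
      = ∑ A ∈ (Finset.univ : Finset (Fin k)).powerset, ∑ T ∈ A.powerset, f T (A \ T) := by
  classical
  rw [Finset.sum_sigma', Finset.sum_sigma']
  refine Finset.sum_nbij' (i := fun P => ⟨P.1 ∪ P.2, P.1⟩)
    (j := fun P => ⟨P.2, P.1 \ P.2⟩) ?_ ?_ ?_ ?_ ?_
  · rintro ⟨T, W⟩ hTW
    simp only [Finset.mem_sigma, Finset.mem_powerset] at hTW ⊢
    exact ⟨Finset.subset_univ _, Finset.subset_union_left⟩
  · rintro ⟨A, T⟩ hAT
    simp only [Finset.mem_sigma, Finset.mem_powerset] at hAT ⊢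
    refine ⟨Finset.subset_univ _, fun x hx => ?_⟩
    rw [Finset.mem_compl]
    exact (Finset.mem_sdiff.1 hx).2
  · rintro ⟨T, W⟩ hTW
    simp only [Finset.mem_sigma, Finset.mem_powerset] at hTW
    have hd : Disjoint T W := by
      rw [Finset.disjoint_left]
      intro x hxT hxW
      exact (Finset.mem_compl.1 (hTW.2 hxW)) hxT
    show (⟨T, (T ∪ W) \ T⟩ : (_ : Finset (Fin k)) × Finset (Fin k)) = ⟨T, W⟩
    rw [Finset.union_sdiff_cancel_left hd]
  · rintro ⟨A, T⟩ hAT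
    simp only [Finset.mem_sigma, Finset.mem_powerset] at hAT
    show (⟨T ∪ A \ T, T⟩ : (_ : Finset (Fin k)) × Finset (Fin k)) = ⟨A, T⟩
    rw [Finset.union_sdiff_of_subset hAT.2]
  · rintro ⟨T, W⟩ hTW
    simp only [Finset.mem_sigma, Finset.mem_powerset] at hTW
    have hd : Disjoint T W := by
      rw [Finset.disjoint_left]
      intro x hxT hxW
      exact (Finset.mem_compl.1 (hTW.2 hxW)) hxT
    show f T W = f T ((T ∪ W) \ T)
    rw [Finset.union_sdiff_cancel_left hd]

end Stmt16Aux


open Stmt16Aux Finset in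
lemma biproduct_single {L : Type*} [DecidableEq L] {m ℓ : ℕ} (w : Fin ℓ → L) (c : Fin m)
    (p : ℕ) :
    biproduct w (Pi.single c p)
      = if ℓ = p then (List.ofFn fun t => lpVar (w t) c).prod else 0 := by
  classical
  rw [biproduct]
  split_ifs with h
  · have hset : (Finset.univ.filter fun f : Fin ℓ → Fin m =>
        ∀ p', (Finset.univ.filter fun t => f t = p').card = (Pi.single c p : Fin m → ℕ) p')
        = {fun _ => c} := by
      rw [Finset.eq_singleton_iff_unique_mem]
      constructor
      · refine Finset.mem_filter.2 ⟨Finset.mem_univ _, fun p' => ?_⟩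
        by_cases hp : p' = c
        · subst hp
          simp [h]
        · rw [Pi.single_apply, if_neg hp]
          rw [Finset.filter_false_of_mem (fun t _ h => hp h.symm)]
          simp
      · intro f hf
        funext t
        by_contra hne
        have h0 := (Finset.mem_filter.1 hf).2 (f t)
        rw [Pi.single_eq_of_ne hne] at h0
        have : t ∈ Finset.univ.filter fun s => f s = f t := by simp
        rw [Finset.card_eq_zero] at h0
        rw [h0] at this
        exact absurd this (Finset.notMem_empty t)
    rw [hset, Finset.sum_singleton]
  · rw [Finset.sum_eq_zero]
    intro f hf
    exfalso
    apply h
    have hsum := Finset.card_eq_sum_card_fiberwise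
      (f := f) (s := Finset.univ) (t := Finset.univ) (fun t _ => Finset.mem_univ (f t))
    rw [Finset.card_univ, Fintype.card_fin] at hsum
    rw [hsum]
    rw [Finset.sum_congr rfl fun p' _ => (Finset.mem_filter.1 hf).2 p']
    rw [Finset.sum_pi_single' c p Finset.univ, if_pos (Finset.mem_univ c)]

open Stmt16Aux Finset in
lemma biproduct_pair {L : Type*} [DecidableEq L] {m ℓ : ℕ} (w : Fin ℓ → L) {c d : Fin m}
    (hcd : c ≠ d) (p r : ℕ) :
    biproduct w (Pi.single c p + Pi.single d r)
      = if ℓ = p + r then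
          ∑ B ∈ (Finset.univ : Finset (Fin ℓ)).powerset.filter (fun B => B.card = r),
            (List.ofFn fun t => lpVar (w t) (if t ∈ B then d else c)).prod
        else 0 := by
  classical
  rw [biproduct]
  have hqc : (Pi.single c p + Pi.single d r : Fin m → ℕ) c = p := by
    simp [Pi.single_apply, hcd]
  have hqd : (Pi.single c p + Pi.single d r : Fin m → ℕ) d = r := by
    simp [Pi.single_apply, Ne.symm hcd]
  have hqo : ∀ e : Fin m, e ≠ c → e ≠ d → (Pi.single c p + Pi.single d r : Fin m → ℕ) e = 0 := by
    intro e h1 h2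
    simp [Pi.single_apply, h1, h2]
  split_ifs with h
  · refine Finset.sum_nbij' (i := fun f => Finset.univ.filter fun t => f t = d)
      (j := fun B => fun t => if t ∈ B then d else c) ?_ ?_ ?_ ?_ ?_
    · intro f hf
      rw [Finset.mem_filter]
      exact ⟨Finset.mem_powerset.2 (Finset.subset_univ _), by
        rw [(Finset.mem_filter.1 hf).2 d, hqd]⟩
    · intro B hB
      rw [Finset.mem_filter, Finset.mem_powerset] at hB
      refine Finset.mem_filter.2 ⟨Finset.mem_univ _, fun p' => ?_⟩
      by_cases h1 : p' = d
      · rw [h1, hqd, ← hB.2]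
        congr 1
        ext t
        simp only [Finset.mem_filter, Finset.mem_univ, true_and]
        by_cases ht : t ∈ B <;> simp [ht, hcd]
      · by_cases h2 : p' = c
        · rw [h2, hqc]
          have : (Finset.univ.filter fun t => (if t ∈ B then d else c) = c) = Bᶜ := by
            ext t
            simp only [Finset.mem_filter, Finset.mem_univ, true_and, Finset.mem_compl]
            by_cases ht : t ∈ B <;> simp [ht, Ne.symm hcd]
          rw [this, Finset.card_compl, Fintype.card_fin, hB.2]
          omega
        · rw [hqo p' h2 h1]
          rw [Finset.card_eq_zero, Finset.filter_eq_empty_iff]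
          intro t _
          by_cases ht : t ∈ B <;> simp [ht, Ne.symm h1, Ne.symm h2]
    · intro f hf
      funext t
      have hval : f t = c ∨ f t = d := by
        by_contra hcon
        push_neg at hcon
        have h0 := (Finset.mem_filter.1 hf).2 (f t)
        rw [hqo (f t) hcon.1 hcon.2, Finset.card_eq_zero] at h0
        have : t ∈ Finset.univ.filter fun s => f s = f t := by simp
        rw [h0] at this
        exact absurd this (Finset.notMem_empty t)
      by_cases ht : f t = d
      · simp [ht]
      · rcases hval with hc | hd
        · simp [ht, hc, hcd]
        · exact absurd hd ht
    · intro B hB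
      ext t
      simp only [Finset.mem_filter, Finset.mem_univ, true_and]
      by_cases ht : t ∈ B <;> simp [ht, hcd]
    · intro f hf
      refine congrArg List.prod (congrArg List.ofFn (funext fun t => ?_))
      simp only [Finset.mem_filter, Finset.mem_univ, true_and]
      congr 1
      have hval : f t = c ∨ f t = d := by
        by_contra hcon
        push_neg at hcon
        have h0 := (Finset.mem_filter.1 hf).2 (f t)
        rw [hqo (f t) hcon.1 hcon.2, Finset.card_eq_zero] at h0
        have : t ∈ Finset.univ.filter fun s => f s = f t := by simp
        rw [h0] at this
        exact absurd this (Finset.notMem_empty t)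
      by_cases hd : f t = d
      · simp [hd]
      · rcases hval with hc | hd'
        · rw [hc, if_neg hcd]
        · exact absurd hd' hd
  · rw [Finset.sum_eq_zero]
    intro f hf
    exfalso
    apply h
    have hsum := Finset.card_eq_sum_card_fiberwise
      (f := f) (s := Finset.univ) (t := Finset.univ) (fun t _ => Finset.mem_univ (f t))
    rw [Finset.card_univ, Fintype.card_fin] at hsum
    rw [hsum, Finset.sum_congr rfl fun p' _ => (Finset.mem_filter.1 hf).2 p']
    rw [show (Pi.single c p + Pi.single d r : Fin m → ℕ)
      = fun x => Pi.single c p x + Pi.single d r x from rfl]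
    rw [Finset.sum_add_distrib, Finset.sum_pi_single' c p, Finset.sum_pi_single' d r]
    simp

open Stmt16Aux Finset in
/-- the canonical monomial indexed by the set `J` of positions carrying place `j`. -/
noncomputable def monoJ {L : Type*} {m : ℕ} {ℓu ℓv : ℕ} (v : Fin ℓv → L) (u : Fin ℓu → L)
    (i j : Fin m) (J : Finset (Fin (ℓv + ℓu))) : LetterplaceAlgebra L m :=
  sprod (fun t => Finsupp.single (Fin.append v u t, if t ∈ J then j else i) 1) Finset.univ

section helpers
open Stmt16Aux Finset

lemma mem_cv_union {a b : ℕ} {S : Finset (Fin a)} {A : Finset (Fin b)} {t : Fin a} :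
    Fin.castAdd b t ∈ S.image (Fin.castAdd b) ∪ A.image (Fin.natAdd a) ↔ t ∈ S := by
  simp only [Finset.mem_union, mem_image_castAdd_iff]
  constructor
  · rintro (h | h)
    · exact h
    · obtain ⟨s, _, he⟩ := Finset.mem_image.1 h
      exact absurd he.symm (castAdd_ne_natAdd t s)
  · exact Or.inl

lemma mem_cu_union {a b : ℕ} {S : Finset (Fin a)} {A : Finset (Fin b)} {t : Fin b} :
    Fin.natAdd a t ∈ S.image (Fin.castAdd b) ∪ A.image (Fin.natAdd a) ↔ t ∈ A := by
  simp only [Finset.mem_union, mem_image_natAdd_iff]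
  constructor
  · rintro (h | h)
    · obtain ⟨s, _, he⟩ := Finset.mem_image.1 h
      exact absurd he (castAdd_ne_natAdd s t)
    · exact h
  · exact Or.inr

lemma compl_union_self' {α : Type*} [Fintype α] [DecidableEq α] (s : Finset α) :
    sᶜ ∪ s = Finset.univ := by
  ext x
  simp [Finset.mem_compl, em]
  tauto

variable {L : Type*} [DecidableEq L] {m : ℕ} (i j : Fin m) {ℓu ℓv : ℕ}
  (u : Fin ℓu → L) (v : Fin ℓv → L)

lemma lhs_prod (S : Finset (Fin ℓv)) :
    shuffleSign S • ((List.ofFn fun t => lpVar (Fin.append u (subword v Sᶜ) t) i).prod *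
        (List.ofFn fun t => lpVar (subword v S t) j).prod)
      = ((-1 : ℤ) ^ (ℓu * ℓv)) • monoJ v u i j (S.image (Fin.castAdd ℓu)) := by
  classical
  set J : Finset (Fin (ℓv + ℓu)) := S.image (Fin.castAdd ℓu) with hJ
  set y : Fin (ℓv + ℓu) → ((L × Fin m) →₀ ℤ) :=
    fun t => Finsupp.single (Fin.append v u t, if t ∈ J then j else i) 1 with hy
  have hyu : ∀ t : Fin ℓu, y (Fin.natAdd ℓv t) = Finsupp.single (u t, i) 1 := by
    intro t
    simp only [hy]
    have h1 : Fin.natAdd ℓv t ∉ J := by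
      rw [hJ]
      intro hmem
      obtain ⟨s, _, he⟩ := Finset.mem_image.1 hmem
      exact castAdd_ne_natAdd s t he
    rw [if_neg h1, Fin.append_right]
  have hyvc : ∀ t ∈ Sᶜ, y (Fin.castAdd ℓu t) = Finsupp.single (v t, i) 1 := by
    intro t ht
    simp only [hy]
    have h1 : Fin.castAdd ℓu t ∉ J := by
      rw [hJ, mem_image_castAdd_iff]
      exact Finset.mem_compl.1 ht
    rw [if_neg h1, Fin.append_left]
  have hyv : ∀ t ∈ S, y (Fin.castAdd ℓu t) = Finsupp.single (v t, j) 1 := by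
    intro t ht
    simp only [hy]
    rw [if_pos (by rw [hJ, mem_image_castAdd_iff]; exact ht), Fin.append_left]
  -- factor 1
  have h1 : (List.ofFn fun t => lpVar (Fin.append u (subword v Sᶜ) t) i).prod
      = sprod y (Finset.univ.image (Fin.natAdd ℓv))
          * sprod y (Sᶜ.image (Fin.castAdd ℓu)) := by
    rw [List.ofFn_add, List.prod_append]
    congr 1
    · rw [← ofFn_eq_sprod y (Fin.strictMono_natAdd ℓv)
        (fun t => Finsupp.single (u t, i) 1) hyu]
      refine congrArg _ (congrArg _ (funext fun t => ?_))
      rw [Fin.append_left']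
      rfl
    · rw [← map_sort_eq_sprod y (Fin.strictMono_castAdd ℓu)
        (fun t => Finsupp.single (v t, i) 1) Sᶜ hyvc]
      have : (List.ofFn fun t => lpVar (Fin.append u (subword v Sᶜ) (Fin.natAdd ℓu t)) i)
          = List.ofFn fun t : Fin Sᶜ.card => lpVar (subword v Sᶜ t) i := by
        refine congrArg _ (funext fun t => ?_)
        rw [Fin.append_right]
      rw [this]
      rw [show (fun t : Fin Sᶜ.card => lpVar (subword v Sᶜ t) i)
        = fun t : Fin Sᶜ.card => (fun a => lpVar (v a) i) ((Sᶜ.orderIsoOfFin rfl t : Fin ℓv))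
        from rfl]
      rw [ofFn_subword_aux (fun a => lpVar (v a) i) Sᶜ]
      rfl
  have h3 : (List.ofFn fun t => lpVar (subword v S t) j).prod
      = sprod y (S.image (Fin.castAdd ℓu)) := by
    rw [← map_sort_eq_sprod y (Fin.strictMono_castAdd ℓu)
      (fun t => Finsupp.single (v t, j) 1) S hyv]
    rw [show (fun t : Fin S.card => lpVar (subword v S t) j)
      = fun t : Fin S.card => (fun a => lpVar (v a) j) ((S.orderIsoOfFin rfl t : Fin ℓv))
      from rfl]
    rw [ofFn_subword_aux (fun a => lpVar (v a) j) S]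
    rfl
  rw [h1, h3]
  have hd1 : Disjoint (Finset.univ.image (Fin.natAdd ℓv)) (Sᶜ.image (Fin.castAdd ℓu)) :=
    (disjoint_image_castAdd_natAdd _ _).symm
  rw [sprod_mul_sprod y hd1, smul_mul_assoc]
  have hd2 : Disjoint (Finset.univ.image (Fin.natAdd ℓv) ∪ Sᶜ.image (Fin.castAdd ℓu))
      (S.image (Fin.castAdd ℓu)) := by
    rw [Finset.disjoint_union_left]
    exact ⟨(disjoint_image_castAdd_natAdd _ _).symm,
      (Finset.disjoint_image (Fin.strictMono_castAdd ℓu).injective).2 disjoint_compl_left⟩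
  rw [sprod_mul_sprod y hd2]
  have hU : (Finset.univ.image (Fin.natAdd ℓv) ∪ Sᶜ.image (Fin.castAdd ℓu))
      ∪ S.image (Fin.castAdd ℓu) = Finset.univ := by
    rw [Finset.union_assoc, ← Finset.image_union, compl_union_self' S,
      Finset.union_comm, union_image_castAdd_natAdd]
  rw [hU]
  rw [smul_smul, smul_smul]
  have hmono : monoJ v u i j J = sprod y Finset.univ := rfl
  rw [← hJ, hmono]
  congr 1
  -- sign computation
  rw [inv2_union_left hd1, inv2_natAdd_castAdd, inv2_natAdd_castAdd,
    inv2_image (Fin.strictMono_castAdd ℓu)]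
  rw [show shuffleSign S = ((-1 : ℤ)) ^ (inv2 Sᶜ S) from rfl]
  rw [Finset.card_univ, Fintype.card_fin]
  rw [← pow_add, ← pow_add]
  have hc : S.card + Sᶜ.card = ℓv := by
    rw [Finset.card_add_card_compl, Fintype.card_fin]
  have hprod : ℓu * Sᶜ.card + ℓu * S.card = ℓu * ℓv := by
    rw [← Nat.left_distrib]
    congr 1
    omega
  have h2 : inv2 Sᶜ S + ℓu * Sᶜ.card + (ℓu * S.card + inv2 Sᶜ S)
      = 2 * inv2 Sᶜ S + ℓu * ℓv := by
    omega
  rw [h2, pow_add, pow_mul, neg_one_sq, one_pow, one_mul]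

end helpers

section helpers2
open Stmt16Aux Finset

variable {L : Type*} [DecidableEq L] {m : ℕ} (i j : Fin m) {ℓu ℓv : ℕ}
  (u : Fin ℓu → L) (v : Fin ℓv → L)

lemma rhs_prod (T : Finset (Fin ℓu)) (S : Finset (Fin ℓv))
    (W : Finset (Fin (Tᶜ : Finset (Fin ℓu)).card)) :
    ((-1 : ℤ) ^ T.card * shuffleSign T) •
      ((List.ofFn fun t => lpVar (Fin.append v (subword u Tᶜ) t)
          (if t ∈ S.image (Fin.castAdd (Tᶜ : Finset (Fin ℓu)).card) ∪ W.image (Fin.natAdd ℓv)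
           then j else i)).prod *
        (List.ofFn fun t => lpVar (subword u T t) j).prod)
      = ((-1 : ℤ) ^ T.card) • monoJ v u i j (S.image (Fin.castAdd ℓu)
          ∪ (T ∪ W.image fun s => ((Tᶜ.orderIsoOfFin rfl s : (Tᶜ : Finset (Fin ℓu))) : Fin ℓu)
            ).image (Fin.natAdd ℓv)) := by
  classical
  set ρ : Fin (Tᶜ : Finset (Fin ℓu)).card → Fin ℓu :=
    fun s => ((Tᶜ.orderIsoOfFin rfl s : (Tᶜ : Finset (Fin ℓu))) : Fin ℓu) with hρ
  have hρmono : StrictMono ρ := fun a b h => (Tᶜ.orderIsoOfFin rfl).strictMono h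
  have hρmem : ∀ s, ρ s ∈ (Tᶜ : Finset (Fin ℓu)) := fun s => (Tᶜ.orderIsoOfFin rfl s).2
  set A : Finset (Fin ℓu) := T ∪ W.image ρ with hA
  set J : Finset (Fin (ℓv + ℓu)) := S.image (Fin.castAdd ℓu) ∪ A.image (Fin.natAdd ℓv) with hJ
  set y : Fin (ℓv + ℓu) → ((L × Fin m) →₀ ℤ) :=
    fun t => Finsupp.single (Fin.append v u t, if t ∈ J then j else i) 1 with hy
  -- value computations of the master family
  have hyv : ∀ t : Fin ℓv,
      y (Fin.castAdd ℓu t) = Finsupp.single (v t, if t ∈ S then j else i) 1 := by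
    intro t
    simp only [hy]
    rw [Fin.append_left, hJ]
    by_cases ht : t ∈ S
    · rw [if_pos (mem_cv_union.2 ht), if_pos ht]
    · rw [if_neg (fun hc => ht (mem_cv_union.1 hc)), if_neg ht]
  have hyw : ∀ s : Fin (Tᶜ : Finset (Fin ℓu)).card,
      y (Fin.natAdd ℓv (ρ s)) = Finsupp.single (u (ρ s), if s ∈ W then j else i) 1 := by
    intro s
    simp only [hy]
    rw [Fin.append_right, hJ]
    have hiff : ρ s ∈ A ↔ s ∈ W := by
      rw [hA, Finset.mem_union]
      constructor
      · rintro (h | h)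
        · exact absurd h (Finset.mem_compl.1 (hρmem s))
        · obtain ⟨s', hs', he⟩ := Finset.mem_image.1 h
          rwa [← hρmono.injective he]
      · intro h; exact Or.inr (Finset.mem_image_of_mem ρ h)
    by_cases hs : s ∈ W
    · rw [if_pos (mem_cu_union.2 (hiff.2 hs)), if_pos hs]
    · rw [if_neg (fun hc => hs (hiff.1 (mem_cu_union.1 hc))), if_neg hs]
  have hyT : ∀ a ∈ T, y (Fin.natAdd ℓv a) = Finsupp.single (u a, j) 1 := by
    intro a ha
    simp only [hy]
    rw [Fin.append_right, hJ,
      if_pos (mem_cu_union.2 (by rw [hA]; exact Finset.mem_union_left _ ha))]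
  -- factor the mixed product
  have h1 : (List.ofFn fun t => lpVar (Fin.append v (subword u Tᶜ) t)
        (if t ∈ S.image (Fin.castAdd (Tᶜ : Finset (Fin ℓu)).card) ∪ W.image (Fin.natAdd ℓv)
         then j else i)).prod
      = sprod y (Finset.univ.image (Fin.castAdd ℓu))
          * sprod y ((Tᶜ : Finset (Fin ℓu)).image (Fin.natAdd ℓv)) := by
    rw [List.ofFn_add, List.prod_append]
    congr 1
    · rw [← ofFn_eq_sprod y (Fin.strictMono_castAdd ℓu)
        (fun t => Finsupp.single (v t, if t ∈ S then j else i) 1) hyv]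
      refine congrArg _ (congrArg _ (funext fun t => ?_))
      rw [Fin.append_left']
      exact congrArg (lpVar (v t)) (if_congr mem_cv_union rfl rfl)
    · have himg : (Tᶜ : Finset (Fin ℓu)).image (Fin.natAdd ℓv)
          = Finset.univ.image (fun s => Fin.natAdd ℓv (ρ s)) := by
        rw [show (fun s => Fin.natAdd ℓv (ρ s)) = Fin.natAdd ℓv ∘ ρ from rfl,
          ← Finset.image_image, hρ, image_orderEmb_univ Tᶜ rfl]
      rw [himg, ← ofFn_eq_sprod y (f := fun s => Fin.natAdd ℓv (ρ s))
        ((Fin.strictMono_natAdd ℓv).comp hρmono)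
        (fun s => Finsupp.single (u (ρ s), if s ∈ W then j else i) 1) hyw]
      refine congrArg _ (congrArg _ (funext fun s => ?_))
      rw [Fin.append_right]
      exact congrArg (lpVar (u (ρ s))) (if_congr mem_cu_union rfl rfl)
  have h3 : (List.ofFn fun t => lpVar (subword u T t) j).prod
      = sprod y (T.image (Fin.natAdd ℓv)) := by
    rw [← map_sort_eq_sprod y (Fin.strictMono_natAdd ℓv)
      (fun a => Finsupp.single (u a, j) 1) T hyT]
    rw [show (fun t : Fin T.card => lpVar (subword u T t) j)
      = fun t : Fin T.card => (fun a => lpVar (u a) j) ((T.orderIsoOfFin rfl t : Fin ℓu))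
      from rfl]
    rw [ofFn_subword_aux (fun a => lpVar (u a) j) T]
    rfl
  rw [h1, h3, mul_assoc]
  have hdTT : Disjoint ((Tᶜ : Finset (Fin ℓu)).image (Fin.natAdd ℓv)) (T.image (Fin.natAdd ℓv)) :=
    (Finset.disjoint_image (Fin.strictMono_natAdd ℓv).injective).2 disjoint_compl_left
  rw [sprod_mul_sprod y hdTT]
  have hUu : (Tᶜ : Finset (Fin ℓu)).image (Fin.natAdd ℓv) ∪ T.image (Fin.natAdd ℓv)
      = Finset.univ.image (Fin.natAdd ℓv) := by
    rw [← Finset.image_union, compl_union_self' T]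
  rw [hUu, mul_smul_comm]
  have hdcv : Disjoint (Finset.univ.image (Fin.castAdd ℓu))
      (Finset.univ.image (Fin.natAdd ℓv)) := disjoint_image_castAdd_natAdd _ _
  rw [sprod_mul_sprod y hdcv, inv2_castAdd_natAdd, pow_zero, one_smul,
    union_image_castAdd_natAdd]
  have hmono : monoJ v u i j J = sprod y Finset.univ := rfl
  rw [← hJ] at *
  rw [smul_smul]
  rw [← hmono]
  congr 1
  rw [inv2_image (Fin.strictMono_natAdd ℓv)]
  rw [show shuffleSign T = ((-1 : ℤ)) ^ (inv2 Tᶜ T) from rfl]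
  rw [mul_assoc, ← pow_add]
  rw [show inv2 Tᶜ T + inv2 Tᶜ T = 2 * inv2 Tᶜ T from by omega, pow_mul, neg_one_sq,
    one_pow, mul_one]

end helpers2


set_option maxHeartbeats 2000000 in
open Stmt16Aux Finset in
/-- a consequence of the straightening law: in `Skew[L|m]`, for words
`u, v`, places `i ≠ j` and `p, q ∈ ℕ`:
`Σ_{(v)} (uv₍₁₎|i^{(p)})(v₍₂₎|j^{(q)}) =
  (-1)^{|u||v|} Σ_{(u),r} (-1)^{|u₍₂₎|} (vu₍₁₎|i^{(p)}j^{(r)})(u₍₂₎|j^{(q-r)})`,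
the slices ranging over all coproduct slices and `0 ≤ r ≤ q` (biproducts of the wrong
length being zero). -/
theorem stmt16 {L : Type*} [DecidableEq L] {m : ℕ} (i j : Fin m) (hij : i ≠ j)
    {ℓu ℓv : ℕ} (u : Fin ℓu → L) (v : Fin ℓv → L) (p q : ℕ) :
    (∑ S ∈ (Finset.univ : Finset (Fin ℓv)).powerset,
      shuffleSign S •
        (biproduct (Fin.append u (subword v Sᶜ)) (Pi.single i p) *
          biproduct (subword v S) (Pi.single j q))) =
    ((-1 : ℤ) ^ (ℓu * ℓv)) •
      ∑ T ∈ (Finset.univ : Finset (Fin ℓu)).powerset, ∑ r ∈ Finset.range (q + 1),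
        (((-1 : ℤ) ^ T.card) * shuffleSign T) •
          (biproduct (Fin.append v (subword u Tᶜ)) (Pi.single i p + Pi.single j r) *
            biproduct (subword u T) (Pi.single j (q - r))) := by

  classical
  -- LHS transformation
  have hL : (∑ S ∈ (Finset.univ : Finset (Fin ℓv)).powerset,
      shuffleSign S •
        (biproduct (Fin.append u (subword v Sᶜ)) (Pi.single i p) *
          biproduct (subword v S) (Pi.single j q)))
      = ∑ S ∈ (Finset.univ : Finset (Fin ℓv)).powerset, ((-1 : ℤ) ^ (ℓu * ℓv)) •
          (if ℓv + ℓu = p + q ∧ S.card = q then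
            monoJ v u i j (S.image (Fin.castAdd ℓu)) else 0) := by
    refine Finset.sum_congr rfl fun S _ => ?_
    rw [biproduct_single, biproduct_single]
    have hccompl : Sᶜ.card = ℓv - S.card := by
      rw [Finset.card_compl, Fintype.card_fin]
    have hcle : S.card ≤ ℓv := by
      have := Finset.card_add_card_compl S
      rw [Fintype.card_fin] at this
      omega
    by_cases h1 : ℓu + Sᶜ.card = p
    · by_cases h2 : S.card = q
      · rw [if_pos h1, if_pos h2, if_pos (by omega), lhs_prod i j u v S]
      · rw [if_neg h2, mul_zero, smul_zero, if_neg (by omega), smul_zero]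
    · rw [if_neg h1, zero_mul, smul_zero, if_neg (by omega), smul_zero]
  rw [hL]
  rw [← Finset.smul_sum]
  congr 1
  symm
  -- RHS transformation
  -- Step 1: expand the two biproducts
  have hE2 : ∀ T : Finset (Fin ℓu), ∀ r : ℕ,
      (((-1 : ℤ) ^ T.card) * shuffleSign T) •
        (biproduct (Fin.append v (subword u Tᶜ)) (Pi.single i p + Pi.single j r) *
          biproduct (subword u T) (Pi.single j (q - r)))
      = if ℓv + (Tᶜ : Finset (Fin ℓu)).card = p + r ∧ T.card = q - r then
          ∑ B ∈ (Finset.univ : Finset (Fin (ℓv + (Tᶜ : Finset (Fin ℓu)).card))).powerset,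
            (if B.card = r then
              (((-1 : ℤ) ^ T.card) * shuffleSign T) •
                ((List.ofFn fun t => lpVar (Fin.append v (subword u Tᶜ) t)
                    (if t ∈ B then j else i)).prod *
                  (List.ofFn fun t => lpVar (subword u T t) j).prod)
             else 0)
        else 0 := by
    intro T r
    rw [biproduct_pair _ hij, biproduct_single]
    by_cases h1 : ℓv + (Tᶜ : Finset (Fin ℓu)).card = p + r
    · by_cases h2 : T.card = q - r
      · rw [if_pos h1, if_pos h2, if_pos ⟨h1, h2⟩]
        rw [Finset.sum_filter, Finset.sum_mul, Finset.smul_sum]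
        refine Finset.sum_congr rfl fun B _ => ?_
        rw [ite_mul, zero_mul, smul_ite, smul_zero]
      · rw [if_neg h2, mul_zero, smul_zero, if_neg (fun hc => h2 hc.2)]
    · rw [if_neg h1, zero_mul, smul_zero, if_neg (fun hc => h1 hc.1)]
  -- Step 2: split B, convert each term to monoJ normal form, transport W
  have hE4 : ∀ T : Finset (Fin ℓu), ∀ r : ℕ,
      (∑ B ∈ (Finset.univ : Finset (Fin (ℓv + (Tᶜ : Finset (Fin ℓu)).card))).powerset,
        (if B.card = r then
          (((-1 : ℤ) ^ T.card) * shuffleSign T) •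
            ((List.ofFn fun t => lpVar (Fin.append v (subword u Tᶜ) t)
                (if t ∈ B then j else i)).prod *
              (List.ofFn fun t => lpVar (subword u T t) j).prod)
         else 0))
      = ∑ S ∈ (Finset.univ : Finset (Fin ℓv)).powerset, ∑ Wh ∈ Tᶜ.powerset,
          (if S.card + Wh.card = r then
            ((-1 : ℤ) ^ T.card) • monoJ v u i j
              (S.image (Fin.castAdd ℓu) ∪ (T ∪ Wh).image (Fin.natAdd ℓv))
           else 0) := by
    intro T r
    rw [powerset_split]
    refine Finset.sum_congr rfl fun S _ => ?_
    rw [← powerset_transport Tᶜ rfl (fun Wh =>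
      if S.card + Wh.card = r then
        ((-1 : ℤ) ^ T.card) • monoJ v u i j
          (S.image (Fin.castAdd ℓu) ∪ (T ∪ Wh).image (Fin.natAdd ℓv))
      else 0)]
    refine Finset.sum_congr rfl fun W _ => ?_
    have hcardU : (S.image (Fin.castAdd (Tᶜ : Finset (Fin ℓu)).card)
        ∪ W.image (Fin.natAdd ℓv)).card = S.card + W.card := by
      rw [Finset.card_union_of_disjoint (disjoint_image_castAdd_natAdd _ _),
        Finset.card_image_of_injective _ (Fin.strictMono_castAdd _).injective,
        Finset.card_image_of_injective _ (Fin.strictMono_natAdd _).injective]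
    have hcardW : (W.image fun s =>
        ((Tᶜ.orderIsoOfFin rfl s : (Tᶜ : Finset (Fin ℓu))) : Fin ℓu)).card = W.card := by
      refine Finset.card_image_of_injective _ (fun a b h => ?_)
      have : StrictMono (fun s : Fin (Tᶜ : Finset (Fin ℓu)).card =>
          ((Tᶜ.orderIsoOfFin rfl s : (Tᶜ : Finset (Fin ℓu))) : Fin ℓu)) :=
        fun a b hab => (Tᶜ.orderIsoOfFin rfl).strictMono hab
      exact this.injective h
    rw [hcardU, hcardW]
    by_cases hc : S.card + W.card = r
    · rw [if_pos hc, if_pos hc]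
      exact rhs_prod i j u v T S W
    · rw [if_neg hc, if_neg hc]
  -- Step 3: collapse the r-sum
  have hE5 : ∀ T : Finset (Fin ℓu),
      (∑ r ∈ Finset.range (q + 1),
        (if ℓv + (Tᶜ : Finset (Fin ℓu)).card = p + r ∧ T.card = q - r then
          ∑ S ∈ (Finset.univ : Finset (Fin ℓv)).powerset, ∑ Wh ∈ Tᶜ.powerset,
            (if S.card + Wh.card = r then
              ((-1 : ℤ) ^ T.card) • monoJ v u i j
                (S.image (Fin.castAdd ℓu) ∪ (T ∪ Wh).image (Fin.natAdd ℓv))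
             else 0)
         else 0))
      = ∑ S ∈ (Finset.univ : Finset (Fin ℓv)).powerset, ∑ Wh ∈ Tᶜ.powerset,
          (if ℓv + ℓu = p + q ∧ S.card + Wh.card + T.card = q then
            ((-1 : ℤ) ^ T.card) • monoJ v u i j
              (S.image (Fin.castAdd ℓu) ∪ (T ∪ Wh).image (Fin.natAdd ℓv))
           else 0) := by
    intro T
    have hTc : (Tᶜ : Finset (Fin ℓu)).card = ℓu - T.card := by
      rw [Finset.card_compl, Fintype.card_fin]
    have hTle : T.card ≤ ℓu := by
      have := Finset.card_add_card_compl T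
      rw [Fintype.card_fin] at this
      omega
    -- push the outer condition inside
    have step1 : ∀ r ∈ Finset.range (q + 1),
        (if ℓv + (Tᶜ : Finset (Fin ℓu)).card = p + r ∧ T.card = q - r then
          ∑ S ∈ (Finset.univ : Finset (Fin ℓv)).powerset, ∑ Wh ∈ Tᶜ.powerset,
            (if S.card + Wh.card = r then
              ((-1 : ℤ) ^ T.card) • monoJ v u i j
                (S.image (Fin.castAdd ℓu) ∪ (T ∪ Wh).image (Fin.natAdd ℓv))
             else 0)
         else 0)
        = ∑ S ∈ (Finset.univ : Finset (Fin ℓv)).powerset, ∑ Wh ∈ Tᶜ.powerset,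
            (if (ℓv + (Tᶜ : Finset (Fin ℓu)).card = p + r ∧ T.card = q - r)
                ∧ S.card + Wh.card = r then
              ((-1 : ℤ) ^ T.card) • monoJ v u i j
                (S.image (Fin.castAdd ℓu) ∪ (T ∪ Wh).image (Fin.natAdd ℓv))
             else 0) := by
      intro r _
      by_cases hc : ℓv + (Tᶜ : Finset (Fin ℓu)).card = p + r ∧ T.card = q - r
      · rw [if_pos hc]
        refine Finset.sum_congr rfl fun S _ => Finset.sum_congr rfl fun Wh _ => ?_
        exact if_congr ⟨fun h => ⟨hc, h⟩, fun h => h.2⟩ rfl rfl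
      · rw [if_neg hc]
        symm
        refine Finset.sum_eq_zero fun S _ => Finset.sum_eq_zero fun Wh _ => ?_
        exact if_neg fun h => hc h.1
    rw [Finset.sum_congr rfl step1, Finset.sum_comm]
    refine Finset.sum_congr rfl fun S _ => ?_
    rw [Finset.sum_comm]
    refine Finset.sum_congr rfl fun Wh _ => ?_
    by_cases hr0 : S.card + Wh.card ≤ q
    · rw [Finset.sum_eq_single (S.card + Wh.card)
        (fun b _ hb => if_neg (fun hc => hb hc.2.symm))
        (fun hc => absurd (Finset.mem_range.2 (by omega)) hc)]
      exact if_congr (by constructor <;> intro h <;> [skip; skip] <;> omega) rfl rfl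
    · rw [Finset.sum_eq_zero (fun r hr => if_neg (fun hc => by
        rw [Finset.mem_range] at hr
        omega))]
      rw [if_neg (fun hc => hr0 (by omega))]
  -- Step 4: reindex (T, Wh) pairs and cancel
  have hE7 : (∑ T ∈ (Finset.univ : Finset (Fin ℓu)).powerset,
      ∑ S ∈ (Finset.univ : Finset (Fin ℓv)).powerset, ∑ Wh ∈ Tᶜ.powerset,
        (if ℓv + ℓu = p + q ∧ S.card + Wh.card + T.card = q then
          ((-1 : ℤ) ^ T.card) • monoJ v u i j
            (S.image (Fin.castAdd ℓu) ∪ (T ∪ Wh).image (Fin.natAdd ℓv))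
         else 0))
      = ∑ S ∈ (Finset.univ : Finset (Fin ℓv)).powerset,
          (if ℓv + ℓu = p + q ∧ S.card = q then
            monoJ v u i j (S.image (Fin.castAdd ℓu)) else 0) := by
    rw [Finset.sum_comm]
    refine Finset.sum_congr rfl fun S _ => ?_
    rw [pair_reindex (fun T Wh =>
      if ℓv + ℓu = p + q ∧ S.card + Wh.card + T.card = q then
        ((-1 : ℤ) ^ T.card) • monoJ v u i j
          (S.image (Fin.castAdd ℓu) ∪ (T ∪ Wh).image (Fin.natAdd ℓv))
      else 0)]
    have step2 : ∀ A ∈ (Finset.univ : Finset (Fin ℓu)).powerset,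
        (∑ T ∈ A.powerset,
          (if ℓv + ℓu = p + q ∧ S.card + (A \ T).card + T.card = q then
            ((-1 : ℤ) ^ T.card) • monoJ v u i j
              (S.image (Fin.castAdd ℓu) ∪ (T ∪ (A \ T)).image (Fin.natAdd ℓv))
           else 0))
        = if ℓv + ℓu = p + q ∧ S.card + A.card = q then
            ((if A = ∅ then (1 : ℤ) else 0)) • monoJ v u i j
              (S.image (Fin.castAdd ℓu) ∪ A.image (Fin.natAdd ℓv))
          else 0 := by
      intro A _
      have hstep : ∀ T ∈ A.powerset,
          (if ℓv + ℓu = p + q ∧ S.card + (A \ T).card + T.card = q then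
            ((-1 : ℤ) ^ T.card) • monoJ v u i j
              (S.image (Fin.castAdd ℓu) ∪ (T ∪ (A \ T)).image (Fin.natAdd ℓv))
           else 0)
          = if ℓv + ℓu = p + q ∧ S.card + A.card = q then
              ((-1 : ℤ) ^ T.card) • monoJ v u i j
                (S.image (Fin.castAdd ℓu) ∪ A.image (Fin.natAdd ℓv))
            else 0 := by
        intro T hT
        rw [Finset.mem_powerset] at hT
        have hcc : (A \ T).card + T.card = A.card := Finset.card_sdiff_add_card_eq_card hT
        rw [Finset.union_sdiff_of_subset hT]
        exact if_congr (by omega) rfl rfl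
      rw [Finset.sum_congr rfl hstep]
      by_cases hc : ℓv + ℓu = p + q ∧ S.card + A.card = q
      · rw [if_pos hc, Finset.sum_congr rfl (fun T _ => if_pos hc), ← Finset.sum_smul,
          sum_powerset_neg_one_pow_card]
      · rw [if_neg hc]
        exact Finset.sum_eq_zero fun T _ => if_neg hc
    rw [Finset.sum_congr rfl step2]
    rw [Finset.sum_eq_single ∅ (fun A _ hA => by
        rw [if_neg hA, zero_smul, ite_self])
      (fun hc => absurd (Finset.empty_mem_powerset _) hc)]
    rw [if_pos rfl, one_smul, Finset.image_empty, Finset.union_empty]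
    exact if_congr (by rw [Finset.card_empty, add_zero]) rfl rfl
  calc ∑ T ∈ (Finset.univ : Finset (Fin ℓu)).powerset, ∑ r ∈ Finset.range (q + 1),
        (((-1 : ℤ) ^ T.card) * shuffleSign T) •
          (biproduct (Fin.append v (subword u Tᶜ)) (Pi.single i p + Pi.single j r) *
            biproduct (subword u T) (Pi.single j (q - r)))
      = ∑ T ∈ (Finset.univ : Finset (Fin ℓu)).powerset,
          ∑ S ∈ (Finset.univ : Finset (Fin ℓv)).powerset, ∑ Wh ∈ Tᶜ.powerset,
            (if ℓv + ℓu = p + q ∧ S.card + Wh.card + T.card = q then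
              ((-1 : ℤ) ^ T.card) • monoJ v u i j
                (S.image (Fin.castAdd ℓu) ∪ (T ∪ Wh).image (Fin.natAdd ℓv))
             else 0) := by
        refine Finset.sum_congr rfl fun T _ => ?_
        rw [← hE5 T]
        refine Finset.sum_congr rfl fun r _ => ?_
        rw [hE2 T r]
        by_cases hc : ℓv + (Tᶜ : Finset (Fin ℓu)).card = p + r ∧ T.card = q - r
        · rw [if_pos hc, if_pos hc, hE4 T r]
        · rw [if_neg hc, if_neg hc]
    _ = ∑ S ∈ (Finset.univ : Finset (Fin ℓv)).powerset,
          (if ℓv + ℓu = p + q ∧ S.card = q then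
            monoJ v u i j (S.image (Fin.castAdd ℓu)) else 0) := hE7
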